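/- Let B, N > 0 and u, θ ∈ C([0,T]). With G* and H the solution operators as defined, one has the polarized identity ∫₀ᵀ (u - B(B+N⁻¹)G*(H(u))) θ dt = ∫₀ᵀ (u - B·H(u))(θ - B·H(θ)) dt + N⁻¹B ∫₀ᵀ (G*(H(u)))' (G*(H(θ)))' dt + B·H(u)(T)·H(θ)(T). -/

import Mathlib

open Set MeasureTheory intervalIntegral

/-- polarized energy identity. With `Hu = H(u)`, `Au = G*(H(u))`
and `Hθ = H(θ)`, `Aθ = G*(H(θ))`, one has
`∫₀ᵀ (u - B(B+N⁻¹)Au) θ = ∫₀ᵀ (u - B·Hu)(θ - B·Hθ) + N⁻¹B ∫₀ᵀ Au' Aθ'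
  + B·Hu(T)·Hθ(T)`. -/
theorem stmt_19 (T B N : ℝ) (hT : 0 < T) (hB : 0 < B) (hN : 0 < N)
    (u θ Hu Hu' Au Au' Hθ Hθ' Aθ Aθ' : ℝ → ℝ)
    (hu : ContinuousOn u (Set.Icc 0 T)) (hθ : ContinuousOn θ (Set.Icc 0 T))
    -- Hu = H(u), Au = G*(Hu)
    (hHud : ∀ t ∈ Set.Icc (0:ℝ) T, HasDerivWithinAt Hu (Hu' t) (Set.Icc 0 T) t)
    (hHuc : ContinuousOn Hu' (Set.Icc 0 T))
    (hAud : ∀ t ∈ Set.Icc (0:ℝ) T, HasDerivWithinAt Au (Au' t) (Set.Icc 0 T) t)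
    (hAuc : ContinuousOn Au' (Set.Icc 0 T))
    (hAueq : ∀ t ∈ Set.Icc (0:ℝ) T, -Au' t + (B + N⁻¹) * Au t = Hu t)
    (hAuT : Au T = 0)
    (hHueq : ∀ t ∈ Set.Icc (0:ℝ) T,
      Hu' t + (B + N⁻¹) * Hu t - N⁻¹ * (B + N⁻¹) * Au t = u t)
    (hHu0 : Hu 0 = 0)
    -- Hθ = H(θ), Aθ = G*(Hθ)
    (hHθd : ∀ t ∈ Set.Icc (0:ℝ) T, HasDerivWithinAt Hθ (Hθ' t) (Set.Icc 0 T) t)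
    (hHθc : ContinuousOn Hθ' (Set.Icc 0 T))
    (hAθd : ∀ t ∈ Set.Icc (0:ℝ) T, HasDerivWithinAt Aθ (Aθ' t) (Set.Icc 0 T) t)
    (hAθc : ContinuousOn Aθ' (Set.Icc 0 T))
    (hAθeq : ∀ t ∈ Set.Icc (0:ℝ) T, -Aθ' t + (B + N⁻¹) * Aθ t = Hθ t)
    (hAθT : Aθ T = 0)
    (hHθeq : ∀ t ∈ Set.Icc (0:ℝ) T,
      Hθ' t + (B + N⁻¹) * Hθ t - N⁻¹ * (B + N⁻¹) * Aθ t = θ t)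
    (hHθ0 : Hθ 0 = 0) :
    ∫ t in (0:ℝ)..T, (u t - B * (B + N⁻¹) * Au t) * θ t
      = (∫ t in (0:ℝ)..T, (u t - B * Hu t) * (θ t - B * Hθ t))
        + N⁻¹ * B * (∫ t in (0:ℝ)..T, Au' t * Aθ' t)
        + B * Hu T * Hθ T := by
  have hHuC : ContinuousOn Hu (Icc 0 T) := fun t ht => (hHud t ht).continuousWithinAt
  have hAuC : ContinuousOn Au (Icc 0 T) := fun t ht => (hAud t ht).continuousWithinAt
  have hHθC : ContinuousOn Hθ (Icc 0 T) := fun t ht => (hHθd t ht).continuousWithinAt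
  have hAθC : ContinuousOn Aθ (Icc 0 T) := fun t ht => (hAθd t ht).continuousWithinAt
  set F : ℝ → ℝ := fun t => B * (Hu t * Hθ t) - B * (B + N⁻¹) * (Au t * Hθ t) with hF
  set F' : ℝ → ℝ := fun t => B * (Hu' t * Hθ t + Hu t * Hθ' t)
      - B * (B + N⁻¹) * (Au' t * Hθ t + Au t * Hθ' t) with hF'
  -- pointwise identity
  have key : ∀ t ∈ Icc (0:ℝ) T,
      (u t - B * (B + N⁻¹) * Au t) * θ t
        = (u t - B * Hu t) * (θ t - B * Hθ t) + N⁻¹ * B * (Au' t * Aθ' t) + F' t := by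
    intro t ht
    have e1 : Hu t = -Au' t + (B + N⁻¹) * Au t := (hAueq t ht).symm
    have e2 : u t = Hu' t + (B + N⁻¹) * Hu t - N⁻¹ * (B + N⁻¹) * Au t :=
      (hHueq t ht).symm
    have e3 : Hθ t = -Aθ' t + (B + N⁻¹) * Aθ t := (hAθeq t ht).symm
    have e4 : θ t = Hθ' t + (B + N⁻¹) * Hθ t - N⁻¹ * (B + N⁻¹) * Aθ t :=
      (hHθeq t ht).symm
    simp only [hF']
    rw [e2, e4, e1, e3]; ring
  -- FTC for F
  have hFd : ∀ t ∈ Icc (0:ℝ) T, HasDerivWithinAt F (F' t) (Icc 0 T) t := by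
    intro t ht
    exact (((hHud t ht).mul (hHθd t ht)).const_mul B).sub
      (((hAud t ht).mul (hHθd t ht)).const_mul (B * (B + N⁻¹)))
  have hFC : ContinuousOn F (Icc 0 T) :=
    (continuousOn_const.mul (hHuC.mul hHθC)).sub (continuousOn_const.mul (hAuC.mul hHθC))
  have hF'C : ContinuousOn F' (Icc 0 T) :=
    (continuousOn_const.mul ((hHuc.mul hHθC).add (hHuC.mul hHθc))).sub
      (continuousOn_const.mul ((hAuc.mul hHθC).add (hAuC.mul hHθc)))
  have hFTC : (∫ t in (0:ℝ)..T, F' t) = B * Hu T * Hθ T := by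
    have h := integral_eq_sub_of_hasDeriv_right_of_le hT.le hFC
      (fun t ht => (hFd t (Ioo_subset_Icc_self ht)).mono_of_mem_nhdsWithin
        (Icc_mem_nhdsGT_of_mem ⟨ht.1.le, ht.2⟩))
      (hF'C.intervalIntegrable_of_Icc hT.le)
    rw [h]; simp only [hF, hAuT, hHu0, hHθ0]; ring
  -- integrability
  have hI1 : IntervalIntegrable (fun t => (u t - B * Hu t) * (θ t - B * Hθ t)) volume 0 T :=
    ((hu.sub (continuousOn_const.mul hHuC)).mul (hθ.sub (continuousOn_const.mul hHθC))).intervalIntegrable_of_Icc hT.le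
  have hI2 : IntervalIntegrable (fun t => N⁻¹ * B * (Au' t * Aθ' t)) volume 0 T :=
    (continuousOn_const.mul (hAuc.mul hAθc)).intervalIntegrable_of_Icc hT.le
  have hI3 : IntervalIntegrable F' volume 0 T := hF'C.intervalIntegrable_of_Icc hT.le
  calc ∫ t in (0:ℝ)..T, (u t - B * (B + N⁻¹) * Au t) * θ t
      = ∫ t in (0:ℝ)..T,
          ((u t - B * Hu t) * (θ t - B * Hθ t) + N⁻¹ * B * (Au' t * Aθ' t) + F' t) := by
        refine integral_congr fun t ht => ?_
        exact key t (by rwa [uIcc_of_le hT.le] at ht)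
    _ = (∫ t in (0:ℝ)..T, (u t - B * Hu t) * (θ t - B * Hθ t))
        + ((∫ t in (0:ℝ)..T, N⁻¹ * B * (Au' t * Aθ' t)) + ∫ t in (0:ℝ)..T, F' t) := by
        simp only [add_assoc]
        rw [integral_add hI1 (hI2.add hI3), integral_add hI2 hI3]
    _ = (∫ t in (0:ℝ)..T, (u t - B * Hu t) * (θ t - B * Hθ t))
        + N⁻¹ * B * (∫ t in (0:ℝ)..T, Au' t * Aθ' t) + B * Hu T * Hθ T := by
        rw [hFTC, intervalIntegral.integral_const_mul]; ring
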